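/- Let (X, d) be a non-Archimedean metric space. Then the Hausdorff distance d_H satisfies the strong triangle inequality on non-empty subsets of X: for all non-empty A, B, C ⊆ X, d_H(A, B) ≤ max{d_H(A, C), d_H(C, B)}. Moreover, d_H(A, closure(A)) = 0 for every non-empty A ⊆ X, and if A and B are closed subsets of X with d_H(A, B) = 0, then A = B. -/

import Mathlib

open scoped ENNReal

open EMetric in
private lemma key_infEdist {X : Type*} [MetricSpace X]
    (hna : ∀ x y z : X, edist x z ≤ max (edist x y) (edist y z))
    (x : X) (B C : Set X) (_hC : C.Nonempty) :
    infEdist x B ≤ max (infEdist x C) (hausdorffEdist C B) := by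
  refine ENNReal.le_of_forall_pos_le_add fun ε hε htop => ?_
  have hxC : infEdist x C < ⊤ := lt_of_le_of_lt (le_max_left _ _) htop
  have hCB : hausdorffEdist C B < ⊤ := lt_of_le_of_lt (le_max_right _ _) htop
  have hε' : (0 : ℝ≥0∞) < ε := by exact_mod_cast hε
  have h1 : infEdist x C < infEdist x C + ε :=
    ENNReal.lt_add_right hxC.ne (by exact_mod_cast hε.ne')
  obtain ⟨c, hcC, hxc⟩ := EMetric.infEdist_lt_iff.mp h1
  have h2 : infEdist c B < hausdorffEdist C B + ε :=
    lt_of_le_of_lt (EMetric.infEdist_le_hausdorffEdist_of_mem hcC)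
      (ENNReal.lt_add_right hCB.ne (by exact_mod_cast hε.ne'))
  obtain ⟨b, hbB, hcb⟩ := EMetric.infEdist_lt_iff.mp h2
  calc infEdist x B ≤ edist x b := EMetric.infEdist_le_edist_of_mem hbB
    _ ≤ max (edist x c) (edist c b) := hna x c b
    _ ≤ max (infEdist x C) (hausdorffEdist C B) + ε := by
        refine max_le ?_ ?_
        · exact le_trans hxc.le (add_le_add (le_max_left _ _) le_rfl)
        · exact le_trans hcb.le (add_le_add (le_max_right _ _) le_rfl)

theorem stmt_3 {X : Type*} [MetricSpace X]
    (hna : ∀ x y z : X, dist x z ≤ max (dist x y) (dist y z)) :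
    (∀ A B C : Set X, A.Nonempty → B.Nonempty → C.Nonempty →
      EMetric.hausdorffEdist A B ≤ max (EMetric.hausdorffEdist A C) (EMetric.hausdorffEdist C B)) ∧
    (∀ A : Set X, A.Nonempty → EMetric.hausdorffEdist A (closure A) = 0) ∧
    (∀ A B : Set X, IsClosed A → IsClosed B → EMetric.hausdorffEdist A B = 0 → A = B) := by
  have hena : ∀ x y z : X, edist x z ≤ max (edist x y) (edist y z) := by
    intro x y z
    rw [edist_dist, edist_dist, edist_dist]
    exact le_trans (ENNReal.ofReal_le_ofReal (hna x y z))
      (le_of_eq (Monotone.map_max fun _ _ h => ENNReal.ofReal_le_ofReal h))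
  refine ⟨?_, ?_, ?_⟩
  · intro A B C hA hB hC
    refine EMetric.hausdorffEdist_le_of_infEdist ?_ ?_
    · intro x hx
      calc EMetric.infEdist x B
          ≤ max (EMetric.infEdist x C) (EMetric.hausdorffEdist C B) :=
            key_infEdist hena x B C hC
        _ ≤ max (EMetric.hausdorffEdist A C) (EMetric.hausdorffEdist C B) :=
            max_le_max (EMetric.infEdist_le_hausdorffEdist_of_mem hx) le_rfl
    · intro y hy
      calc EMetric.infEdist y A
          ≤ max (EMetric.infEdist y C) (EMetric.hausdorffEdist C A) :=
            key_infEdist hena y A C hC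
        _ ≤ max (EMetric.hausdorffEdist A C) (EMetric.hausdorffEdist C B) := by
            refine max_le ?_ ?_
            · exact le_trans (EMetric.infEdist_le_hausdorffEdist_of_mem hy)
                (le_trans (le_of_eq (EMetric.hausdorffEdist_comm)) (le_max_right _ _))
            · exact le_trans (le_of_eq (EMetric.hausdorffEdist_comm)) (le_max_left _ _)
  · intro A _
    exact EMetric.hausdorffEdist_self_closure
  · intro A B hA hB h
    exact (EMetric.hausdorffEdist_zero_iff_eq_of_closed hA hB).mp h
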